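/- Under the assumptions that Q is symmetric positive definite, J(z)ᵀ = -J(z) for all z, and z ↦ J(z)Q is Lipschitz with constant L on B(y₀; 2‖y₀‖_Q) w.r.t. the Q-norm, if h < 2/(L‖y₀‖_Q) then the fixed-point iteration x_{k+1} = Φ_h(x_k) converges to the unique fixed point of Φ_h in B(y₀; 2‖y₀‖_Q) for every starting vector x₀ ∈ ℝⁿ. -/

import Mathlib

open Matrix

/-- The `Q`-norm of a vector, `‖x‖_Q = √(xᵀ Q x)`. -/
noncomputable def qnorm {n : ℕ} (Q : Matrix (Fin n) (Fin n) ℝ) (x : Fin n → ℝ) : ℝ :=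
  Real.sqrt (x ⬝ᵥ Q.mulVec x)

/-- The operator norm on `ℝ^{n×n}` induced by the `Q`-norm. -/
noncomputable def qOpNorm {n : ℕ} (Q M : Matrix (Fin n) (Fin n) ℝ) : ℝ :=
  sInf {c : ℝ | 0 ≤ c ∧ ∀ x : Fin n → ℝ, qnorm Q (M.mulVec x) ≤ c * qnorm Q x}

/-- The Cayley transform `C(A) = (I - A)⁻¹ (I + A)`. -/
noncomputable def cayley {n : ℕ} (A : Matrix (Fin n) (Fin n) ℝ) : Matrix (Fin n) (Fin n) ℝ :=
  (1 - A)⁻¹ * (1 + A)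

/-- The midpoint-rule fixed point map `Φ_h(x) = C((h/2) J((y₀+x)/2) Q) y₀`. -/
noncomputable def Phi {n : ℕ} (Q : Matrix (Fin n) (Fin n) ℝ)
    (J : (Fin n → ℝ) → Matrix (Fin n) (Fin n) ℝ) (y₀ : Fin n → ℝ) (h : ℝ)
    (x : Fin n → ℝ) : Fin n → ℝ :=
  (cayley ((h / 2) • (J ((1 / 2 : ℝ) • (y₀ + x)) * Q))).mulVec y₀

namespace Stmt18Aux

variable {n : ℕ} {Q : Matrix (Fin n) (Fin n) ℝ}

lemma Qt (hQ : Q.PosDef) : Qᵀ = Q := by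
  have := hQ.1
  rwa [Matrix.IsHermitian, conjTranspose_eq_transpose_of_trivial] at this

lemma qsym (hQ : Q.PosDef) (v w : Fin n → ℝ) :
    v ⬝ᵥ Q *ᵥ w = w ⬝ᵥ Q *ᵥ v := by
  rw [dotProduct_mulVec, ← mulVec_transpose, Qt hQ, dotProduct_comm]

lemma qsq_nonneg (hQ : Q.PosDef) (v : Fin n → ℝ) : 0 ≤ v ⬝ᵥ Q *ᵥ v := by
  simpa using hQ.posSemidef.dotProduct_mulVec_nonneg v

lemma qsq_pos (hQ : Q.PosDef) {v : Fin n → ℝ} (hv : v ≠ 0) : 0 < v ⬝ᵥ Q *ᵥ v := by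
  simpa using hQ.dotProduct_mulVec_pos hv

lemma qnorm_nonneg (hQ : Q.PosDef) (v : Fin n → ℝ) : 0 ≤ qnorm Q v := Real.sqrt_nonneg _

open scoped MatrixOrder in
/-- square root of `Q` -/
noncomputable def S (hQ : Q.PosDef) : Matrix (Fin n) (Fin n) ℝ := CFC.sqrt Q

open scoped MatrixOrder in
lemma S_mul_S (hQ : Q.PosDef) : S hQ * S hQ = Q := CFC.sqrt_mul_sqrt_self Q hQ.posSemidef.nonneg

open scoped MatrixOrder in
lemma S_transpose (hQ : Q.PosDef) : (S hQ)ᵀ = S hQ := by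
  have := (CFC.sqrt_nonneg Q).posSemidef.1
  rwa [Matrix.IsHermitian, conjTranspose_eq_transpose_of_trivial] at this

lemma S_det (hQ : Q.PosDef) : IsUnit (S hQ).det := by
  rw [isUnit_iff_ne_zero]
  intro h0
  have : (S hQ).det * (S hQ).det = Q.det := by rw [← det_mul, S_mul_S]
  rw [h0, mul_zero] at this
  exact absurd this.symm (ne_of_gt hQ.det_pos)

lemma Sinv_mul (hQ : Q.PosDef) : (S hQ)⁻¹ * S hQ = 1 := nonsing_inv_mul _ (S_det hQ)
lemma mul_Sinv (hQ : Q.PosDef) : S hQ * (S hQ)⁻¹ = 1 := mul_nonsing_inv _ (S_det hQ)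

noncomputable def iota (hQ : Q.PosDef) (v : Fin n → ℝ) : EuclideanSpace ℝ (Fin n) :=
  (EuclideanSpace.equiv (Fin n) ℝ).symm (S hQ *ᵥ v)

noncomputable def kappa (hQ : Q.PosDef) (u : EuclideanSpace ℝ (Fin n)) : Fin n → ℝ :=
  (S hQ)⁻¹ *ᵥ (EuclideanSpace.equiv (Fin n) ℝ u)

lemma kappa_iota (hQ : Q.PosDef) (v : Fin n → ℝ) : kappa hQ (iota hQ v) = v := by
  simp only [kappa, iota, ContinuousLinearEquiv.apply_symm_apply, mulVec_mulVec, Sinv_mul hQ,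
    one_mulVec]

lemma iota_kappa (hQ : Q.PosDef) (u : EuclideanSpace ℝ (Fin n)) : iota hQ (kappa hQ u) = u := by
  simp [kappa, iota, mulVec_mulVec, mul_Sinv hQ]

lemma norm_iota (hQ : Q.PosDef) (v : Fin n → ℝ) : ‖iota hQ v‖ = qnorm Q v := by
  rw [EuclideanSpace.norm_eq, qnorm]
  congr 1
  have happ : ∀ i, (iota hQ v) i = (S hQ *ᵥ v) i := fun i => rfl
  have h1 : ∑ i, ‖(iota hQ v) i‖ ^ 2 = (S hQ *ᵥ v) ⬝ᵥ (S hQ *ᵥ v) := by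
    simp only [happ, Real.norm_eq_abs, sq_abs, dotProduct, pow_two]
    exact Finset.sum_congr rfl fun i _ => by rw [abs_mul_abs_self]
  rw [h1]
  conv_lhs => rw [show (S hQ *ᵥ v) ⬝ᵥ (S hQ *ᵥ v) = (v ᵥ* S hQ) ⬝ᵥ (S hQ *ᵥ v) by
    rw [← mulVec_transpose, S_transpose]]
  rw [← dotProduct_mulVec, mulVec_mulVec, S_mul_S]

lemma iota_sub (hQ : Q.PosDef) (a b : Fin n → ℝ) :
    iota hQ (a - b) = iota hQ a - iota hQ b := by
  simp [iota, mulVec_sub, map_sub]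

lemma iota_add (hQ : Q.PosDef) (a b : Fin n → ℝ) :
    iota hQ (a + b) = iota hQ a + iota hQ b := by
  simp [iota, mulVec_add, map_add]

lemma iota_smul (hQ : Q.PosDef) (c : ℝ) (a : Fin n → ℝ) :
    iota hQ (c • a) = c • iota hQ a := by
  simp [iota, mulVec_smul, _root_.map_smul]

lemma dist_iota (hQ : Q.PosDef) (a b : Fin n → ℝ) :
    dist (iota hQ a) (iota hQ b) = qnorm Q (a - b) := by
  rw [dist_eq_norm, ← iota_sub, norm_iota]

lemma qnorm_smul (hQ : Q.PosDef) (c : ℝ) (a : Fin n → ℝ) :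
    qnorm Q (c • a) = |c| * qnorm Q a := by
  rw [← norm_iota hQ, iota_smul, norm_smul, Real.norm_eq_abs, norm_iota]

lemma qnorm_sub_le (hQ : Q.PosDef) (a b : Fin n → ℝ) :
    qnorm Q (a - b) ≤ qnorm Q a + qnorm Q b := by
  rw [← norm_iota hQ, ← norm_iota hQ, ← norm_iota hQ, iota_sub]
  exact norm_sub_le _ _

lemma qnorm_eq_zero (hQ : Q.PosDef) {v : Fin n → ℝ} (hv : qnorm Q v = 0) : v = 0 := by
  by_contra h0
  have := qsq_pos hQ h0
  have : qnorm Q v > 0 := Real.sqrt_pos.mpr this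
  linarith [hv]

lemma kappa_continuous (hQ : Q.PosDef) : Continuous (kappa hQ) := by
  have : kappa hQ = fun u => Matrix.mulVecLin (S hQ)⁻¹ ((EuclideanSpace.equiv (Fin n) ℝ) u) := by
    funext u; simp [kappa, Matrix.mulVecLin_apply]
  rw [this]
  exact (LinearMap.continuous_of_finiteDimensional _).comp
    (EuclideanSpace.equiv (Fin n) ℝ).continuous


/-- the linear map `u ↦ ι (M (κ u))` on Euclidean space -/
noncomputable def TQ (hQ : Q.PosDef) (M : Matrix (Fin n) (Fin n) ℝ) :
    EuclideanSpace ℝ (Fin n) →ₗ[ℝ] EuclideanSpace ℝ (Fin n) where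
  toFun u := iota hQ (M *ᵥ kappa hQ u)
  map_add' a b := by
    simp [kappa, iota, map_add, mulVec_add, Matrix.mulVec_add]
  map_smul' c a := by
    simp [kappa, iota, _root_.map_smul, mulVec_smul]

lemma exists_opbound (hQ : Q.PosDef) (M : Matrix (Fin n) (Fin n) ℝ) :
    ∃ c : ℝ, 0 ≤ c ∧ ∀ x : Fin n → ℝ, qnorm Q (M *ᵥ x) ≤ c * qnorm Q x := by
  set T := LinearMap.toContinuousLinearMap (TQ hQ M)
  refine ⟨‖T‖, norm_nonneg _, fun x => ?_⟩
  have h1 : T (iota hQ x) = iota hQ (M *ᵥ x) := by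
    show (TQ hQ M) (iota hQ x) = iota hQ (M *ᵥ x)
    simp [TQ, kappa_iota, LinearMap.coe_mk]
  calc qnorm Q (M *ᵥ x) = ‖T (iota hQ x)‖ := by rw [h1, norm_iota]
    _ ≤ ‖T‖ * ‖iota hQ x‖ := T.le_opNorm _
    _ = ‖T‖ * qnorm Q x := by rw [norm_iota]

lemma qnorm_mulVec_le (hQ : Q.PosDef) (M : Matrix (Fin n) (Fin n) ℝ) (x : Fin n → ℝ) :
    qnorm Q (M *ᵥ x) ≤ qOpNorm Q M * qnorm Q x := by
  obtain ⟨c, hc0, hc⟩ := exists_opbound hQ M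
  have hne : Set.Nonempty {c : ℝ | 0 ≤ c ∧ ∀ x : Fin n → ℝ, qnorm Q (M.mulVec x) ≤ c * qnorm Q x} :=
    ⟨c, hc0, hc⟩
  rcases eq_or_lt_of_le (qnorm_nonneg hQ x) with h0 | hpos
  · have hx : x = 0 := qnorm_eq_zero hQ h0.symm
    subst hx
    simp only [mulVec_zero, ← h0, mul_zero]
    have : qnorm Q (0 : Fin n → ℝ) = 0 := by
      simp [qnorm, dotProduct_zero, zero_dotProduct, mulVec_zero, Real.sqrt_zero]
    simpa [this] using le_refl (0:ℝ)
  · rw [qOpNorm, ← div_le_iff₀ hpos] at *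
    refine le_csInf hne ?_
    rintro b ⟨hb0, hb⟩
    rw [div_le_iff₀ hpos]
    exact hb x

section skew

variable {A B : Matrix (Fin n) (Fin n) ℝ}

lemma skewQ (hQ : Q.PosDef) (hB : Bᵀ = -B) (c : ℝ) :
    (c • (B * Q))ᵀ * Q = -(Q * (c • (B * Q))) := by
  rw [transpose_smul, transpose_mul, hB, Qt hQ]
  simp only [smul_mul_assoc, mul_smul_comm, mul_neg, neg_mul, smul_neg, mul_assoc]

lemma skew_dot (hQ : Q.PosDef) (hA : Aᵀ * Q = -(Q * A)) (v w : Fin n → ℝ) :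
    (A *ᵥ v) ⬝ᵥ Q *ᵥ w = -(v ⬝ᵥ Q *ᵥ (A *ᵥ w)) := by
  have h1 : v ⬝ᵥ (Aᵀ * Q) *ᵥ w = (A *ᵥ v) ⬝ᵥ Q *ᵥ w := by
    rw [← mulVec_mulVec, dotProduct_mulVec, ← mulVec_transpose, transpose_transpose]
  rw [← h1, hA, neg_mulVec, dotProduct_neg, ← mulVec_mulVec]

lemma skew_self_zero (hQ : Q.PosDef) (hA : Aᵀ * Q = -(Q * A)) (m : Fin n → ℝ) :
    m ⬝ᵥ Q *ᵥ (A *ᵥ m) = 0 := by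
  have h1 := skew_dot hQ hA m m
  have h2 := qsym hQ (A *ᵥ m) m
  linarith [h1, h2, qsym hQ m (A *ᵥ m)]

lemma one_sub_det_unit (hQ : Q.PosDef) (hA : Aᵀ * Q = -(Q * A)) :
    IsUnit (1 - A).det := by
  rw [isUnit_iff_ne_zero]
  intro hdet
  obtain ⟨v, hv0, hv⟩ := (Matrix.exists_mulVec_eq_zero_iff).mpr hdet
  rw [sub_mulVec, one_mulVec, sub_eq_zero] at hv
  have hz := skew_self_zero hQ hA v
  have h1 : v ⬝ᵥ Q *ᵥ v = v ⬝ᵥ Q *ᵥ (A *ᵥ v) := congrArg (fun t => v ⬝ᵥ Q *ᵥ t) hv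
  have := qsq_pos hQ hv0
  rw [h1, hz] at this
  exact lt_irrefl 0 this

lemma resolvent_le (hQ : Q.PosDef) (hA : Aᵀ * Q = -(Q * A)) (v : Fin n → ℝ) :
    qnorm Q ((1 - A)⁻¹ *ᵥ v) ≤ qnorm Q v := by
  set w := (1 - A)⁻¹ *ᵥ v with hwdef
  have hv : v = w - A *ᵥ w := by
    have h1 : (1 - A) *ᵥ w = v := by
      rw [hwdef, mulVec_mulVec, mul_nonsing_inv _ (one_sub_det_unit hQ hA), one_mulVec]
    rw [← h1, sub_mulVec, one_mulVec]
  have expand : (w - A *ᵥ w) ⬝ᵥ Q *ᵥ (w - A *ᵥ w)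
      = w ⬝ᵥ Q *ᵥ w - w ⬝ᵥ Q *ᵥ (A *ᵥ w) - ((A *ᵥ w) ⬝ᵥ Q *ᵥ w - (A *ᵥ w) ⬝ᵥ Q *ᵥ (A *ᵥ w)) := by
    rw [mulVec_sub, sub_dotProduct, dotProduct_sub, dotProduct_sub]
  have hz := skew_self_zero hQ hA w
  have hsd := skew_dot hQ hA w w
  have hnn := qsq_nonneg hQ (A *ᵥ w)
  apply Real.sqrt_le_sqrt
  rw [hv, expand]
  linarith

lemma cayley_isometry (hQ : Q.PosDef) (hA : Aᵀ * Q = -(Q * A)) (y : Fin n → ℝ) :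
    qnorm Q (cayley A *ᵥ y) = qnorm Q y := by
  set w := cayley A *ᵥ y with hwdef
  have h1 : (1 - A) *ᵥ w = (1 + A) *ᵥ y := by
    rw [hwdef, cayley, mulVec_mulVec, ← mul_assoc,
      mul_nonsing_inv _ (one_sub_det_unit hQ hA), one_mul]
  have h2 : w - y = A *ᵥ (w + y) := by
    rw [sub_mulVec, one_mulVec, add_mulVec, one_mulVec] at h1
    rw [mulVec_add]
    linear_combination h1
  have hz := skew_self_zero hQ hA (w + y)
  have hskew := skew_dot hQ hA (w + y) (w + y)
  have hsym := qsym hQ w y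
  have expand : (w - y) ⬝ᵥ Q *ᵥ (w + y)
      = w ⬝ᵥ Q *ᵥ w + w ⬝ᵥ Q *ᵥ y - y ⬝ᵥ Q *ᵥ w - y ⬝ᵥ Q *ᵥ y := by
    rw [mulVec_add, sub_dotProduct, dotProduct_add, dotProduct_add]
    ring
  have expand2 : (w - y) ⬝ᵥ Q *ᵥ (w + y) = (A *ᵥ (w + y)) ⬝ᵥ Q *ᵥ (w + y) := by rw [h2]
  have key : w ⬝ᵥ Q *ᵥ w = y ⬝ᵥ Q *ᵥ y := by linarith
  rw [qnorm, qnorm, key]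

lemma cayley_sub (hdA : IsUnit (1 - A).det) (hdA' : IsUnit (1 - B).det) :
    cayley A - cayley B = (1 - A)⁻¹ * ((2:ℝ) • (A - B)) * (1 - B)⁻¹ := by
  have h1 : (1 - A) * (cayley A) = 1 + A := by
    rw [cayley, ← mul_assoc, mul_nonsing_inv _ hdA, one_mul]
  have h2 : (cayley B) * (1 - B) = 1 + B := by
    have comm : (1 + B) * (1 - B) = (1 - B) * (1 + B) := by noncomm_ring
    rw [cayley, mul_assoc, comm, ← mul_assoc, nonsing_inv_mul _ hdA', one_mul]
  have key : (1 - A) * (cayley A - cayley B) * (1 - B) = (2:ℝ) • (A - B) := by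
    have e1 : (1 - A) * (cayley A - cayley B) * (1 - B)
        = ((1 - A) * cayley A) * (1 - B) - (1 - A) * (cayley B * (1 - B)) := by
      noncomm_ring
    rw [e1, h1, h2, two_smul ℝ (A - B)]
    noncomm_ring
  have main : cayley A - cayley B
      = (1 - A)⁻¹ * ((1 - A) * (cayley A - cayley B) * (1 - B)) * (1 - B)⁻¹ := by
    rw [mul_assoc (1 - A), ← mul_assoc ((1 - A)⁻¹), nonsing_inv_mul _ hdA, one_mul,
      mul_assoc, mul_nonsing_inv _ hdA', mul_one]
  rw [main, key]

end skew

end Stmt18Aux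

/-- If `h·L·‖y₀‖_Q < 2` (i.e. `h < 2/(L‖y₀‖_Q)`), the fixed-point iteration
`x_{k+1} = Φ_h(x_k)` converges, for every starting vector `x₀`, to the unique
fixed point of `Φ_h` in the ball `B(y₀; 2‖y₀‖_Q)`. -/
theorem stmt18 {n : ℕ} (Q : Matrix (Fin n) (Fin n) ℝ) (hQ : Q.PosDef)
    (J : (Fin n → ℝ) → Matrix (Fin n) (Fin n) ℝ) (hJ : ∀ z, (J z)ᵀ = -(J z))
    (y₀ : Fin n → ℝ) (L : ℝ) (hL : 0 ≤ L)
    (hLip : ∀ z z' : Fin n → ℝ,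
      qnorm Q (z - y₀) ≤ 2 * qnorm Q y₀ → qnorm Q (z' - y₀) ≤ 2 * qnorm Q y₀ →
      qOpNorm Q (J z * Q - J z' * Q) ≤ L * qnorm Q (z - z'))
    (h : ℝ) (hh : 0 < h) (hsmall : h * L * qnorm Q y₀ < 2) :
    ∃ y : Fin n → ℝ,
      (qnorm Q (y - y₀) ≤ 2 * qnorm Q y₀ ∧ Phi Q J y₀ h y = y) ∧
      (∀ y' : Fin n → ℝ, qnorm Q (y' - y₀) ≤ 2 * qnorm Q y₀ →
        Phi Q J y₀ h y' = y' → y' = y) ∧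
      (∀ x₀ : Fin n → ℝ,
        Filter.Tendsto (fun k => (Phi Q J y₀ h)^[k] x₀) Filter.atTop (nhds y)) := by
    classical
  set q := qnorm Q y₀ with hq
  have hq0 : 0 ≤ q := Stmt18Aux.qnorm_nonneg hQ y₀
  set Φ := Phi Q J y₀ h with hΦ
  set z : (Fin n → ℝ) → (Fin n → ℝ) := fun x => (1/2 : ℝ) • (y₀ + x) with hz
  set A : (Fin n → ℝ) → Matrix (Fin n) (Fin n) ℝ := fun x => (h/2) • (J (z x) * Q) with hA
  have hAskew : ∀ x, (A x)ᵀ * Q = -(Q * A x) := fun x => Stmt18Aux.skewQ hQ (hJ (z x)) _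
  have hdet : ∀ x, IsUnit (1 - A x).det := fun x => Stmt18Aux.one_sub_det_unit hQ (hAskew x)
  have hPhix : ∀ x, Φ x = cayley (A x) *ᵥ y₀ := fun x => rfl
  have hiso : ∀ x, qnorm Q (Φ x) = q := by
    intro x
    rw [hPhix x]
    exact Stmt18Aux.cayley_isometry hQ (hAskew x) y₀
  have hball : ∀ x, qnorm Q (Φ x - y₀) ≤ 2 * q := by
    intro x
    calc qnorm Q (Φ x - y₀) ≤ qnorm Q (Φ x) + qnorm Q y₀ := Stmt18Aux.qnorm_sub_le hQ _ _
      _ = 2 * q := by rw [hiso]; ring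
  set K : ℝ := h * L * q / 2 with hK
  have hK0 : 0 ≤ K :=
    div_nonneg (mul_nonneg (mul_nonneg hh.le hL) hq0) (by norm_num)
  have hK1 : K < 1 := by rw [hK]; linarith [hsmall]
  have hcontr : ∀ x x', qnorm Q (x - y₀) ≤ 2*q → qnorm Q (x' - y₀) ≤ 2*q →
      qnorm Q (Φ x - Φ x') ≤ K * qnorm Q (x - x') := by
    intro x x' hx hx'
    have hzb : ∀ u, qnorm Q (u - y₀) ≤ 2*q → qnorm Q (z u - y₀) ≤ 2*q := by
      intro u hu
      have he : z u - y₀ = (1/2 : ℝ) • (u - y₀) := by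
        funext i
        simp only [hz, Pi.sub_apply, Pi.smul_apply, Pi.add_apply, smul_eq_mul]
        ring
      rw [he, Stmt18Aux.qnorm_smul hQ, abs_of_pos (by norm_num : (0:ℝ) < 1/2)]
      nlinarith [Stmt18Aux.qnorm_nonneg hQ (u - y₀)]
    have hzz : z x - z x' = (1/2 : ℝ) • (x - x') := by
      funext i
      simp only [hz, Pi.sub_apply, Pi.smul_apply, Pi.add_apply, smul_eq_mul]
      ring
    have hLip' := hLip (z x) (z x') (hzb x hx) (hzb x' hx')
    have hqzz : qnorm Q (z x - z x') = (1/2) * qnorm Q (x - x') := by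
      rw [hzz, Stmt18Aux.qnorm_smul hQ, abs_of_pos (by norm_num : (0:ℝ) < 1/2)]
    rw [hqzz] at hLip'
    set w : Fin n → ℝ := (1 - A x')⁻¹ *ᵥ y₀ with hw
    have hwq : qnorm Q w ≤ q := Stmt18Aux.resolvent_le hQ (hAskew x') y₀
    have hdiff : Φ x - Φ x' = (1 - A x)⁻¹ *ᵥ (((2:ℝ) • (A x - A x')) *ᵥ w) := by
      rw [hPhix, hPhix, ← sub_mulVec, Stmt18Aux.cayley_sub (hdet x) (hdet x'), hw,
        mulVec_mulVec, mulVec_mulVec]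
    have step1 : qnorm Q (Φ x - Φ x') ≤ qnorm Q (((2:ℝ) • (A x - A x')) *ᵥ w) := by
      rw [hdiff]; exact Stmt18Aux.resolvent_le hQ (hAskew x) _
    have step2 : (((2:ℝ) • (A x - A x')) *ᵥ w)
        = (2:ℝ) • ((h/2) • ((J (z x) * Q - J (z x') * Q) *ᵥ w)) := by
      rw [show A x - A x' = (h/2) • (J (z x) * Q - J (z x') * Q) from (smul_sub _ _ _).symm,
        smul_mulVec, smul_mulVec]
    have step3 : qnorm Q (((2:ℝ) • (A x - A x')) *ᵥ w)
        = 2 * ((h/2) * qnorm Q ((J (z x) * Q - J (z x') * Q) *ᵥ w)) := by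
      rw [step2, Stmt18Aux.qnorm_smul hQ, Stmt18Aux.qnorm_smul hQ,
        abs_of_pos (by norm_num : (0:ℝ) < 2), abs_of_pos (by positivity : (0:ℝ) < h/2)]
    have hd0 : 0 ≤ qnorm Q (x - x') := Stmt18Aux.qnorm_nonneg hQ _
    have step4 : qnorm Q ((J (z x) * Q - J (z x') * Q) *ᵥ w)
        ≤ (L * ((1/2) * qnorm Q (x - x'))) * qnorm Q w := by
      calc qnorm Q ((J (z x) * Q - J (z x') * Q) *ᵥ w)
          ≤ qOpNorm Q (J (z x) * Q - J (z x') * Q) * qnorm Q w :=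
            Stmt18Aux.qnorm_mulVec_le hQ _ _
        _ ≤ (L * ((1/2) * qnorm Q (x - x'))) * qnorm Q w :=
            mul_le_mul_of_nonneg_right hLip' (Stmt18Aux.qnorm_nonneg hQ w)
    have c2 : (L * ((1/2) * qnorm Q (x - x'))) * qnorm Q w
        ≤ (L * ((1/2) * qnorm Q (x - x'))) * q :=
      mul_le_mul_of_nonneg_left hwq (mul_nonneg hL (mul_nonneg (by norm_num) hd0))
    calc qnorm Q (Φ x - Φ x')
        ≤ 2 * ((h/2) * qnorm Q ((J (z x) * Q - J (z x') * Q) *ᵥ w)) := step3 ▸ step1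
      _ = h * qnorm Q ((J (z x) * Q - J (z x') * Q) *ᵥ w) := by ring
      _ ≤ h * ((L * ((1/2) * qnorm Q (x - x'))) * qnorm Q w) :=
          mul_le_mul_of_nonneg_left step4 hh.le
      _ ≤ h * ((L * ((1/2) * qnorm Q (x - x'))) * q) := mul_le_mul_of_nonneg_left c2 hh.le
      _ = K * qnorm Q (x - x') := by rw [hK]; ring
  -- Banach fixed point on the closed ball in Euclidean space
  set B : Set (EuclideanSpace ℝ (Fin n)) :=
    Metric.closedBall (Stmt18Aux.iota hQ y₀) (2*q) with hB
  haveI : CompleteSpace B := Metric.isClosed_closedBall.isComplete.completeSpace_coe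
  have memB : ∀ v : Fin n → ℝ, Stmt18Aux.iota hQ v ∈ B ↔ qnorm Q (v - y₀) ≤ 2*q := by
    intro v
    rw [hB, Metric.mem_closedBall, Stmt18Aux.dist_iota]
  set g : B → B := fun u => ⟨Stmt18Aux.iota hQ (Φ (Stmt18Aux.kappa hQ ↑u)),
    (memB _).mpr (hball _)⟩ with hg
  have hcoe : ∀ u : B, (↑(g u) : EuclideanSpace ℝ (Fin n))
      = Stmt18Aux.iota hQ (Φ (Stmt18Aux.kappa hQ ↑u)) := fun u => rfl
  have hdistB : ∀ u v : B, dist u v = qnorm Q (Stmt18Aux.kappa hQ ↑u - Stmt18Aux.kappa hQ ↑v) := by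
    intro u v
    rw [Subtype.dist_eq]
    conv_lhs => rw [← Stmt18Aux.iota_kappa hQ (↑u : EuclideanSpace ℝ (Fin n)),
      ← Stmt18Aux.iota_kappa hQ (↑v : EuclideanSpace ℝ (Fin n))]
    rw [Stmt18Aux.dist_iota]
  have hmemq : ∀ u : B, qnorm Q (Stmt18Aux.kappa hQ ↑u - y₀) ≤ 2*q := by
    intro u
    have hu : dist (↑u : EuclideanSpace ℝ (Fin n)) (Stmt18Aux.iota hQ y₀) ≤ 2*q := u.2
    calc qnorm Q (Stmt18Aux.kappa hQ ↑u - y₀)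
        = dist (Stmt18Aux.iota hQ (Stmt18Aux.kappa hQ ↑u)) (Stmt18Aux.iota hQ y₀) :=
          (Stmt18Aux.dist_iota hQ _ _).symm
      _ ≤ 2*q := by rw [Stmt18Aux.iota_kappa]; exact hu
  set K' : NNReal := ⟨K, hK0⟩ with hK'
  have hgK : ContractingWith K' g := by
    constructor
    · exact_mod_cast hK1
    · apply LipschitzWith.of_dist_le_mul
      intro u v
      calc dist (g u) (g v) = qnorm Q (Φ (Stmt18Aux.kappa hQ ↑u) - Φ (Stmt18Aux.kappa hQ ↑v)) := by
            rw [hdistB]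
            simp only [hcoe, Stmt18Aux.kappa_iota]
        _ ≤ K * qnorm Q (Stmt18Aux.kappa hQ ↑u - Stmt18Aux.kappa hQ ↑v) :=
            hcontr _ _ (hmemq u) (hmemq v)
        _ = (K' : ℝ) * dist u v := by rw [hdistB]; rfl
  haveI : Nonempty B := ⟨⟨Stmt18Aux.iota hQ y₀,
    Metric.mem_closedBall_self (by positivity)⟩⟩
  set fp := ContractingWith.fixedPoint g hgK with hfp
  set y := Stmt18Aux.kappa hQ ↑fp with hy
  have hyball : qnorm Q (y - y₀) ≤ 2*q := hmemq fp
  have hfix : Φ y = y := by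
    have h1 : g fp = fp := hgK.fixedPoint_isFixedPt
    have h2 : Stmt18Aux.iota hQ (Φ (Stmt18Aux.kappa hQ ↑fp)) = (↑fp : EuclideanSpace ℝ (Fin n)) :=
      congrArg Subtype.val h1
    rw [hy]
    calc Φ (Stmt18Aux.kappa hQ ↑fp)
        = Stmt18Aux.kappa hQ (Stmt18Aux.iota hQ (Φ (Stmt18Aux.kappa hQ ↑fp))) :=
          (Stmt18Aux.kappa_iota hQ _).symm
      _ = Stmt18Aux.kappa hQ ↑fp := by rw [h2]
  refine ⟨y, ⟨hyball, hfix⟩, ?_, ?_⟩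
  · intro y' hy'ball hy'fix
    set u' : B := ⟨Stmt18Aux.iota hQ y', (memB _).mpr hy'ball⟩ with hu'
    have hfixu' : Function.IsFixedPt g u' := by
      apply Subtype.ext
      show Stmt18Aux.iota hQ (Φ (Stmt18Aux.kappa hQ ↑u')) = (↑u' : EuclideanSpace ℝ (Fin n))
      have : Stmt18Aux.kappa hQ (↑u' : EuclideanSpace ℝ (Fin n)) = y' := Stmt18Aux.kappa_iota hQ y'
      rw [this, hy'fix]
    have heq : u' = fp := hgK.fixedPoint_unique hfixu'
    have heq' : Stmt18Aux.iota hQ y' = (↑fp : EuclideanSpace ℝ (Fin n)) :=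
      congrArg Subtype.val heq
    calc y' = Stmt18Aux.kappa hQ (Stmt18Aux.iota hQ y') := (Stmt18Aux.kappa_iota hQ _).symm
      _ = Stmt18Aux.kappa hQ ↑fp := by rw [heq']
      _ = y := rfl
  · intro x₀
    set x₁ := Φ x₀ with hx₁
    set u₁ : B := ⟨Stmt18Aux.iota hQ x₁, (memB _).mpr (hball _)⟩ with hu₁
    have hiter : ∀ m : ℕ, (↑(g^[m] u₁) : EuclideanSpace ℝ (Fin n))
        = Stmt18Aux.iota hQ (Φ^[m] x₁) := by
      intro m
      induction m with
      | zero => simp [hu₁]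
      | succ m ih =>
        rw [Function.iterate_succ_apply', Function.iterate_succ_apply']
        rw [hcoe, ih, Stmt18Aux.kappa_iota]
    have ht1 : Filter.Tendsto (fun m => g^[m] u₁) Filter.atTop (nhds fp) :=
      hgK.tendsto_iterate_fixedPoint u₁
    have ht2 : Filter.Tendsto (fun m => (↑(g^[m] u₁) : EuclideanSpace ℝ (Fin n)))
        Filter.atTop (nhds ↑fp) :=
      ((continuous_subtype_val.tendsto _).comp ht1)
    have ht3 : Filter.Tendsto (fun m => Stmt18Aux.iota hQ (Φ^[m] x₁))
        Filter.atTop (nhds ↑fp) := by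
      simpa only [hiter] using ht2
    have ht4 : Filter.Tendsto (fun m => Stmt18Aux.kappa hQ (Stmt18Aux.iota hQ (Φ^[m] x₁)))
        Filter.atTop (nhds (Stmt18Aux.kappa hQ ↑fp)) :=
      ((Stmt18Aux.kappa_continuous hQ).tendsto _).comp ht3
    simp only [Stmt18Aux.kappa_iota] at ht4
    have ht5 : Filter.Tendsto (fun k => Φ^[k+1] x₀) Filter.atTop (nhds y) := by
      simpa only [Function.iterate_succ_apply] using ht4
    exact (Filter.tendsto_add_atTop_iff_nat 1).mp ht5
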